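/- Let A be a 2-divisible abelian group (for every a ∈ A there exists b ∈ A with 2b = a), let n ≥ 1, and let (x₀, …, xₙ) ∈ A^{n+1} satisfy x₀ + ⋯ + xₙ = 0. For 0 ≤ k ≤ n define P_k ∈ A^{n+1} by P_k = (x₀, …, x_{k−1}, −(x₀ + ⋯ + x_{k−1}), 0, …, 0), so that P₀ = (0, …, 0) and Pₙ = (x₀, …, xₙ). Then for every 0 ≤ k < n there exist u, t₁, t₂ ∈ A with 2u = x₀ + ⋯ + x_{k−1} such that P_k = (x₀, …, x_{k−1}, t₁ − u, −t₁ − u, 0, …, 0) and P_{k+1} = (x₀, …, x_{k−1}, t₂ − u, −t₂ − u, 0, …, 0). (This is the chain construction in the proof of Proposition 6.5: any point of the singular generalized Kummer variety K'_n(A) = A₀^{n+1}/S_{n+1} is connected to the origin by a chain of n surfaces, each the image of the unirational Kummer surface A/±1, proving rational chain connectedness of K_n(A) for a supersingular abelian surface A.) -/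

import Mathlib

/-- Chain construction in the proof of Proposition 6.5: for a 2-divisible
abelian group `A` and a point `(x₀,…,xₙ)` of `A₀^{n+1}`, the intermediate
points `P_k` and `P_{k+1}` both lie on a common "Kummer surface" of the form
`t ↦ (x₀,…,x_{k−1}, t−u, −t−u, 0,…,0)` with `2u = x₀+⋯+x_{k−1}`. -/
theorem stmt_14
    (A : Type*) [AddCommGroup A]
    (hdiv : ∀ a : A, ∃ b : A, 2 • b = a)
    (n : ℕ) (hn : 1 ≤ n)
    (x : Fin (n + 1) → A) (hx : ∑ i, x i = 0)
    (P : ℕ → Fin (n + 1) → A)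
    (hP : ∀ k, ∀ i : Fin (n + 1), P k i =
      if (i : ℕ) < k then x i
      else if (i : ℕ) = k then
        -(∑ j ∈ Finset.univ.filter (fun j : Fin (n + 1) => (j : ℕ) < k), x j)
      else 0) :
    ∀ k, k < n → ∃ u t₁ t₂ : A,
      2 • u = (∑ j ∈ Finset.univ.filter (fun j : Fin (n + 1) => (j : ℕ) < k), x j) ∧
      (∀ i : Fin (n + 1), P k i =
        if (i : ℕ) < k then x i
        else if (i : ℕ) = k then t₁ - u
        else if (i : ℕ) = k + 1 then -t₁ - u
        else 0) ∧
      (∀ i : Fin (n + 1), P (k + 1) i =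
        if (i : ℕ) < k then x i
        else if (i : ℕ) = k then t₂ - u
        else if (i : ℕ) = k + 1 then -t₂ - u
        else 0) := by
  intro k hk
  obtain ⟨u, hu⟩ :=
    hdiv (∑ j ∈ Finset.univ.filter (fun j : Fin (n + 1) => (j : ℕ) < k), x j)
  have hkn : k < n + 1 := by omega
  set K : Fin (n + 1) := ⟨k, hkn⟩
  have hsum : (∑ j ∈ Finset.univ.filter (fun j : Fin (n + 1) => (j : ℕ) < k + 1), x j)
      = (∑ j ∈ Finset.univ.filter (fun j : Fin (n + 1) => (j : ℕ) < k), x j) + x K := by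
    have hset : Finset.univ.filter (fun j : Fin (n + 1) => (j : ℕ) < k + 1)
        = insert K (Finset.univ.filter (fun j : Fin (n + 1) => (j : ℕ) < k)) := by
      ext j
      simp only [Finset.mem_filter, Finset.mem_univ, true_and, Finset.mem_insert]
      constructor
      · intro h
        rcases Nat.lt_succ_iff_lt_or_eq.mp h with h | h
        · exact Or.inr h
        · exact Or.inl (Fin.ext h)
      · rintro (rfl | h)
        · exact lt_add_one k
        · omega
    rw [hset, Finset.sum_insert (by simp [K]), add_comm]
  refine ⟨u, -u, u + x K, hu, ?_, ?_⟩
  · intro i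
    rw [hP k i]
    rcases lt_trichotomy (i : ℕ) k with h | h | h
    · simp [h]
    · have : ¬ (i : ℕ) < k := by omega
      simp only [this, if_false, h, if_true]
      rw [← hu]; abel
    · have h1 : ¬ (i : ℕ) < k := by omega
      have h2 : (i : ℕ) ≠ k := by omega
      simp only [h1, if_false, h2]
      by_cases h3 : (i : ℕ) = k + 1 <;> simp [h3] <;> abel
  · intro i
    rw [hP (k + 1) i]
    rcases lt_trichotomy (i : ℕ) k with h | h | h
    · simp [h, Nat.lt_succ_of_lt h]
    · have h1 : (i : ℕ) < k + 1 := by omega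
      have h2 : ¬ (i : ℕ) < k := by omega
      have hiK : i = K := Fin.ext h
      rw [if_pos h1, if_neg h2, if_pos h, hiK]
      abel
    · have h1 : ¬ (i : ℕ) < k := by omega
      have h2 : (i : ℕ) ≠ k := by omega
      have h3 : ¬ (i : ℕ) < k + 1 := by omega
      simp only [h1, if_false, h2, h3]
      by_cases h4 : (i : ℕ) = k + 1
      · simp only [h4, if_true]
        rw [hsum, ← hu]; abel
      · simp [h4]
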